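/- For every real b with 0 ≤ b ≤ 5, the partial transpose of the Horodecki state ρ_b is positive semidefinite if and only if 1 ≤ b ≤ 4; that is, ρ_b is PPT exactly for 1 ≤ b ≤ 4 and NPT (entangled) for 0 ≤ b < 1 and 4 < b ≤ 5. -/

import Mathlib

open Matrix Complex
open scoped Matrix Kronecker ComplexOrder

noncomputable section

/-- A density matrix: Hermitian, positive semidefinite, trace 1. -/
def IsDensityMatrix {n : Type*} [Fintype n] [DecidableEq n] (ρ : Matrix n n ℂ) : Prop :=
  ρ.IsHermitian ∧ ρ.PosSemidef ∧ ρ.trace = 1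

/-- A separable state on ℂ^d ⊗ ℂ^d : a finite convex combination of Kronecker
products of density matrices. -/
def IsSepState {d : ℕ} (ρ : Matrix (Fin d × Fin d) (Fin d × Fin d) ℂ) : Prop :=
  ∃ (K : ℕ) (p : Fin K → ℝ) (ρ₁ ρ₂ : Fin K → Matrix (Fin d) (Fin d) ℂ),
    (∀ k, 0 ≤ p k) ∧ (∑ k, p k = 1) ∧
    (∀ k, IsDensityMatrix (ρ₁ k)) ∧ (∀ k, IsDensityMatrix (ρ₂ k)) ∧
    ρ = ∑ k, (p k : ℂ) • (ρ₁ k ⊗ₖ ρ₂ k)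

/-- Hilbert–Schmidt inner product ⟨A,B⟩ = Tr(A†B). -/
def hsInner {n : Type*} [Fintype n] (A B : Matrix n n ℂ) : ℂ := (Aᴴ * B).trace

/-- Hilbert–Schmidt (Frobenius) norm ‖A‖ = √Tr(A†A). -/
def hsNorm {n : Type*} [Fintype n] (A : Matrix n n ℂ) : ℝ :=
  Real.sqrt ((Aᴴ * A).trace.re)

/-- The Weyl operator U_{nm} on ℂ^d: (U_{nm})_{k,l} = exp(2πi k n / d) if l = (k+m) mod d. -/
def weyl (d : ℕ) (n m : Fin d) : Matrix (Fin d) (Fin d) ℂ :=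
  Matrix.of fun k l =>
    if l = k + m then Complex.exp (2 * Real.pi * Complex.I * k.val * n.val / d) else 0

/-- The maximally entangled two-qutrit vector |φ⁺₃⟩. -/
def phiPlus3 : (Fin 3 × Fin 3) → ℂ :=
  fun p => if p.1 = p.2 then ((1 / Real.sqrt 3 : ℝ) : ℂ) else 0

/-- The projector |φ⁺₃⟩⟨φ⁺₃|. -/
def projPhiPlus3 : Matrix (Fin 3 × Fin 3) (Fin 3 × Fin 3) ℂ :=
  vecMulVec phiPlus3 (star phiPlus3)

/-- The two-qutrit Bell projectors P_{nm}. -/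
def bellP (n m : Fin 3) : Matrix (Fin 3 × Fin 3) (Fin 3 × Fin 3) ℂ :=
  (weyl 3 n m ⊗ₖ (1 : Matrix (Fin 3) (Fin 3) ℂ)) * projPhiPlus3 *
    (weyl 3 n m ⊗ₖ (1 : Matrix (Fin 3) (Fin 3) ℂ))ᴴ

/-- The three-parameter family of two-qutrit states ρ_{α,β,γ}. -/
def rhoFam (α β γ : ℝ) : Matrix (Fin 3 × Fin 3) (Fin 3 × Fin 3) ℂ :=
  (((1 - α - β - γ) / 9 : ℝ) : ℂ) • (1 : Matrix (Fin 3 × Fin 3) (Fin 3 × Fin 3) ℂ) +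
    (α : ℂ) • bellP 0 0 + ((β / 2 : ℝ) : ℂ) • (bellP 1 0 + bellP 2 0) +
    ((γ / 3 : ℝ) : ℂ) • (bellP 0 1 + bellP 1 1 + bellP 2 1)

/-- The operator U₁. -/
def opU1 : Matrix (Fin 3 × Fin 3) (Fin 3 × Fin 3) ℂ :=
  weyl 3 0 1 ⊗ₖ weyl 3 0 1 + weyl 3 0 2 ⊗ₖ weyl 3 0 2 + weyl 3 1 1 ⊗ₖ weyl 3 2 1 +
    weyl 3 1 2 ⊗ₖ weyl 3 2 2 + weyl 3 2 1 ⊗ₖ weyl 3 1 1 + weyl 3 2 2 ⊗ₖ weyl 3 1 2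

/-- The operator U₂ᴵ. -/
def opU2I : Matrix (Fin 3 × Fin 3) (Fin 3 × Fin 3) ℂ := weyl 3 1 0 ⊗ₖ weyl 3 2 0

/-- The operator U₂ᴵᴵ. -/
def opU2II : Matrix (Fin 3 × Fin 3) (Fin 3 × Fin 3) ℂ := weyl 3 2 0 ⊗ₖ weyl 3 1 0

/-- The operator U₂ = U₂ᴵ + U₂ᴵᴵ. -/
def opU2 : Matrix (Fin 3 × Fin 3) (Fin 3 × Fin 3) ℂ := opU2I + opU2II

/-- σ₊ = (1/3)(|01⟩⟨01| + |12⟩⟨12| + |20⟩⟨20|). -/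
def sigmaPlus : Matrix (Fin 3 × Fin 3) (Fin 3 × Fin 3) ℂ :=
  (1 / 3 : ℂ) • Matrix.diagonal (fun p => if p.2 = p.1 + 1 then 1 else 0)

/-- σ₋ = (1/3)(|10⟩⟨10| + |21⟩⟨21| + |02⟩⟨02|). -/
def sigmaMinus : Matrix (Fin 3 × Fin 3) (Fin 3 × Fin 3) ℂ :=
  (1 / 3 : ℂ) • Matrix.diagonal (fun p => if p.1 = p.2 + 1 then 1 else 0)

/-- The Horodecki states ρ_b. -/
def horodecki (b : ℝ) : Matrix (Fin 3 × Fin 3) (Fin 3 × Fin 3) ℂ :=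
  (2 / 7 : ℂ) • projPhiPlus3 + ((b / 7 : ℝ) : ℂ) • sigmaPlus +
    (((5 - b) / 7 : ℝ) : ℂ) • sigmaMinus

/-- Partial transpose in the second subsystem. -/
def ptB (ρ : Matrix (Fin 3 × Fin 3) (Fin 3 × Fin 3) ℂ) :
    Matrix (Fin 3 × Fin 3) (Fin 3 × Fin 3) ℂ :=
  Matrix.of fun p q => ρ (p.1, q.2) (q.1, p.2)

lemma proj_apply' (i j k l : Fin 3) :
    projPhiPlus3 (i, j) (k, l) = if i = j ∧ k = l then (1/3 : ℂ) else 0 := by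
  have h3 : ((Real.sqrt 3 : ℝ) : ℂ) * ((Real.sqrt 3 : ℝ) : ℂ) = 3 := by
    rw [← Complex.ofReal_mul, Real.mul_self_sqrt (by norm_num)]; norm_num
  simp only [projPhiPlus3, vecMulVec_apply, phiPlus3, Pi.star_apply]
  by_cases hij : i = j <;> by_cases hkl : k = l <;>
    simp only [hij, hkl, if_true, if_false, if_pos rfl, star_zero, mul_zero, zero_mul,
      Complex.star_def, Complex.conj_ofReal, ite_true, ite_false] <;>
    try simp [hij, hkl]
  · field_simp
    rw [sq, h3]

lemma sigmaPlus_apply' (i j k l : Fin 3) :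
    sigmaPlus (i, j) (k, l) = if i = k ∧ j = l ∧ j = i + 1 then (1/3 : ℂ) else 0 := by
  simp only [sigmaPlus, Matrix.smul_apply, Matrix.diagonal_apply, Prod.mk.injEq, smul_eq_mul]
  by_cases h1 : i = k <;> by_cases h2 : j = l <;> by_cases h3 : j = i + 1 <;>
    simp [h1, h2, h3]

lemma sigmaMinus_apply' (i j k l : Fin 3) :
    sigmaMinus (i, j) (k, l) = if i = k ∧ j = l ∧ i = j + 1 then (1/3 : ℂ) else 0 := by
  simp only [sigmaMinus, Matrix.smul_apply, Matrix.diagonal_apply, Prod.mk.injEq, smul_eq_mul]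
  by_cases h1 : i = k <;> by_cases h2 : j = l <;> by_cases h3 : i = j + 1 <;>
    simp [h1, h2, h3]

lemma ptB_apply' (b : ℝ) (i j k l : Fin 3) :
    ptB (horodecki b) (i, j) (k, l) =
      (if i = l ∧ k = j then (((2/21 : ℝ)) : ℂ) else 0) +
      (if i = k ∧ l = j ∧ l = i + 1 then (((b/21 : ℝ)) : ℂ) else 0) +
      (if i = k ∧ l = j ∧ i = l + 1 then ((((5 - b)/21 : ℝ)) : ℂ) else 0) := by
  show horodecki b (i, l) (k, j) = _
  simp only [horodecki, Matrix.add_apply, Matrix.smul_apply, proj_apply', sigmaPlus_apply',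
    sigmaMinus_apply', smul_eq_mul, mul_ite, mul_zero, mul_one]
  push_cast
  congr 1
  · congr 1
    · split_ifs <;> ring
    · split_ifs <;> ring
  · split_ifs <;> ring

lemma ptB_herm (b : ℝ) : (ptB (horodecki b)).IsHermitian := by
  ext ⟨i, j⟩ ⟨k, l⟩
  rw [Matrix.conjTranspose_apply, ptB_apply', ptB_apply']
  simp only [star_add, apply_ite (star : ℂ → ℂ), star_zero, Complex.star_def,
    Complex.conj_ofReal]
  congr 1
  · congr 1
    · exact if_congr and_comm rfl rfl
    · exact if_congr (by constructor <;> (rintro ⟨h1, h2, h3⟩; refine ⟨h1.symm, h2.symm, ?_⟩) <;>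
        (subst h1; subst h2; exact h3)) rfl rfl
  · exact if_congr (by constructor <;> (rintro ⟨h1, h2, h3⟩; refine ⟨h1.symm, h2.symm, ?_⟩) <;>
      (subst h1; subst h2; exact h3)) rfl rfl

lemma key' (b : ℝ) (hb1 : 1 ≤ b) (hb4 : b ≤ 4) (a c e f : ℝ) :
    0 ≤ b*(a^2+c^2) + (5-b)*(e^2+f^2) + 4*(a*e+c*f) := by
  nlinarith [sq_nonneg (b*a+2*e), sq_nonneg (b*c+2*f),
    mul_nonneg (mul_nonneg (sub_nonneg.2 hb1) (by linarith : (0:ℝ) ≤ 4-b)) (sq_nonneg e),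
    mul_nonneg (mul_nonneg (sub_nonneg.2 hb1) (by linarith : (0:ℝ) ≤ 4-b)) (sq_nonneg f),
    sq_nonneg a, sq_nonneg c, sq_nonneg e, sq_nonneg f]

set_option maxHeartbeats 2000000 in
/-- The Horodecki state ρ_b is PPT exactly for 1 ≤ b ≤ 4. -/
theorem stmt14 (b : ℝ) (hb0 : 0 ≤ b) (hb5 : b ≤ 5) :
    (ptB (horodecki b)).PosSemidef ↔ (1 ≤ b ∧ b ≤ 4) := by
  constructor
  · intro hps
    obtain ⟨-, hq⟩ := posSemidef_iff_dotProduct_mulVec.mp hps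
    have H1 := hq (fun p => (((if p = (0,1) then 2 else if p = (1,0) then -b else 0 : ℝ)) : ℂ))
    have H2 := hq (fun p => (((if p = (0,1) then b - 5 else if p = (1,0) then 2 else 0 : ℝ)) : ℂ))
    rw [Complex.le_def] at H1 H2
    obtain ⟨H1, -⟩ := H1
    obtain ⟨H2, -⟩ := H2
    simp only [dotProduct, mulVec, Fintype.sum_prod_type, Fin.sum_univ_three, Pi.star_apply,
      ptB_apply'] at H1 H2
    simp (config := { decide := true }) only [ite_true, ite_false, and_self, add_zero,
      zero_add, mul_zero, zero_mul, mul_one, Complex.star_def, Complex.conj_ofReal,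
      ← Complex.ofReal_mul, ← Complex.ofReal_add, Complex.ofReal_re,
      Complex.zero_re] at H1 H2
    have hP : 0 ≤ b * (5 - b) - 4 := by nlinarith [H1, H2]
    constructor
    · by_contra h
      push_neg at h
      nlinarith [mul_pos (show (0:ℝ) < 1 - b by linarith) (show (0:ℝ) < 4 - b by linarith)]
    · by_contra h
      push_neg at h
      nlinarith [mul_pos (show (0:ℝ) < b - 1 by linarith) (show (0:ℝ) < b - 4 by linarith)]
  · rintro ⟨hb1, hb4⟩
    refine posSemidef_iff_dotProduct_mulVec.mpr ⟨ptB_herm b, fun x => ?_⟩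
    simp only [dotProduct, mulVec, Fintype.sum_prod_type, Fin.sum_univ_three, Pi.star_apply,
      ptB_apply']
    simp (config := { decide := true }) only [ite_true, ite_false, and_self, add_zero,
      zero_add, mul_zero, zero_mul, mul_one]
    rw [Complex.le_def]
    constructor
    · simp only [Complex.add_re, Complex.add_im, Complex.mul_re, Complex.mul_im,
        Complex.ofReal_re, Complex.ofReal_im, Complex.star_def, Complex.conj_re,
        Complex.conj_im, Complex.zero_re]
      have k1 := key' b hb1 hb4 (x (0,1)).re (x (0,1)).im (x (1,0)).re (x (1,0)).im
      have k2 := key' b hb1 hb4 (x (1,2)).re (x (1,2)).im (x (2,1)).re (x (2,1)).im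
      have k3 := key' b hb1 hb4 (x (2,0)).re (x (2,0)).im (x (0,2)).re (x (0,2)).im
      nlinarith [k1, k2, k3, sq_nonneg (x (0,0)).re, sq_nonneg (x (0,0)).im,
        sq_nonneg (x (1,1)).re, sq_nonneg (x (1,1)).im,
        sq_nonneg (x (2,2)).re, sq_nonneg (x (2,2)).im]
    · simp only [Complex.add_re, Complex.add_im, Complex.mul_re, Complex.mul_im,
        Complex.ofReal_re, Complex.ofReal_im, Complex.star_def, Complex.conj_re,
        Complex.conj_im, Complex.zero_im]
      ring


end
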